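/- If ξ : [0,T] → ℝ is continuous and ∫₀ᵀ ∫₀ᵀ φ(u−v) ξ(u) ξ(v) du dv = 0, then ξ(t) = 0 for all t ∈ [0,T]; hence ⟨·,·⟩_T is a genuine (positive definite) scalar product on the space of continuous functions on [0,T]. -/

import Mathlib

open MeasureTheory intervalIntegral Set Real

namespace FbmAux

lemma intervalIntegrable_abs_rpow {α : ℝ} (hα : -1 < α) (u : ℝ) (a b : ℝ) :
    IntervalIntegrable (fun v => |v - u| ^ α) volume a b := by
  have key : ∀ c : ℝ, IntervalIntegrable (fun v => |v - u| ^ α) volume u c := by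
    intro c
    rcases le_total u c with h | h
    · have h1 : IntervalIntegrable (fun v => (v - u) ^ α) volume (0 + u) ((c - u) + u) :=
        (intervalIntegrable_rpow' hα (a := 0) (b := c - u)).comp_sub_right u
      rw [zero_add, sub_add_cancel] at h1
      rw [intervalIntegrable_iff] at h1 ⊢
      refine h1.congr_fun (fun v hv => ?_) measurableSet_uIoc
      rw [uIoc_of_le h] at hv
      rw [abs_of_pos (by linarith [hv.1] : (0:ℝ) < v - u)]
    · have h1 : IntervalIntegrable (fun v => (u - v) ^ α) volume (u - 0) (u - (u - c)) :=
        (intervalIntegrable_rpow' hα (a := 0) (b := u - c)).comp_sub_left u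
      rw [sub_zero, sub_sub_cancel] at h1
      rw [intervalIntegrable_iff] at h1 ⊢
      refine h1.congr_fun (fun v hv => ?_) measurableSet_uIoc
      rw [uIoc_of_ge h] at hv
      rw [abs_sub_comm, abs_of_nonneg (by linarith [hv.2] : (0:ℝ) ≤ u - v)]
  exact (key a).symm.trans (key b)

lemma integrableOn_abs_rpow {α : ℝ} (hα : -1 < α) (u : ℝ) {a b : ℝ} (hab : a ≤ b) :
    IntegrableOn (fun v => |v - u| ^ α) (Ioc a b) := by
  have := intervalIntegrable_abs_rpow hα u a b
  rwa [intervalIntegrable_iff, uIoc_of_le hab] at this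

lemma rep0 {β : ℝ} (hβ : 0 < β) {a : ℝ} (ha : 0 < a) :
    ∫ t in Ioi (0:ℝ), t ^ (β - 1) * Real.exp (-(a * t)) = Real.Gamma β * a ^ (-β) := by
  rw [Real.integral_rpow_mul_exp_neg_mul_Ioi hβ ha, one_div,
    ← Real.rpow_neg_one a, ← Real.rpow_mul ha.le, neg_one_mul, mul_comm]

lemma gInt {β : ℝ} (hβ : 0 < β) {a : ℝ} (ha : 0 < a) :
    IntegrableOn (fun t => t ^ (β - 1) * Real.exp (-(a * t))) (Ioi 0) := by
  have h := integrableOn_rpow_mul_exp_neg_mul_rpow (by linarith : (-1:ℝ) < β - 1) zero_lt_one ha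
  refine h.congr_fun (fun t ht => ?_) measurableSet_Ioi
  simp only [Real.rpow_one, neg_mul]

lemma exp_int {t : ℝ} (ht : 0 < t) {m : ℝ} (hm : 0 ≤ m) :
    ∫ s in Ioc (0:ℝ) m, 2*t*Real.exp (2*t*s) = Real.exp (2*t*m) - 1 := by
  rw [← intervalIntegral.integral_of_le hm]
  have hderiv : ∀ x ∈ uIcc (0:ℝ) m, HasDerivAt (fun s => Real.exp (2*t*s))
      (2*t*Real.exp (2*t*x)) x := by
    intro x _
    have h1 : HasDerivAt (fun s : ℝ => 2*t*s) (2*t) x := by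
      simpa using (hasDerivAt_id x).const_mul (2*t)
    simpa [mul_comm] using h1.exp
  have hint : IntervalIntegrable (fun x => 2*t*Real.exp (2*t*x)) volume 0 m :=
    (by continuity : Continuous fun x => 2*t*Real.exp (2*t*x)).intervalIntegrable 0 m
  rw [intervalIntegral.integral_eq_sub_of_hasDerivAt hderiv hint]
  simp

lemma cont_B {f : ℝ → ℝ} (hf : Continuous f) (T : ℝ) :
    Continuous fun s => ∫ x in s..T, f x := by
  have h1 : Continuous fun s => ∫ x in T..s, f x :=
    intervalIntegral.continuous_primitive (fun a b => hf.intervalIntegrable a b) T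
  have h2 : (fun s => ∫ x in s..T, f x) = fun s => -∫ x in T..s, f x := by
    funext s; exact intervalIntegral.integral_symm T s
  rw [h2]; exact h1.neg

lemma decomp {T t : ℝ} (hT : 0 < T) (ht : 0 < t) {ζ : ℝ → ℝ} (hζ : Continuous ζ)
    {M : ℝ} (hM : ∀ x, |ζ x| ≤ M) :
    ∫ u in Ioc (0:ℝ) T, ∫ v in Ioc (0:ℝ) T, Real.exp (-(|u - v| * t)) * (ζ u * ζ v)
      = (∫ x in (0:ℝ)..T, Real.exp (-(x*t)) * ζ x)^2
        + ∫ s in Ioc (0:ℝ) T, 2*t*Real.exp (2*t*s) * (∫ x in s..T, Real.exp (-(x*t)) * ζ x)^2 := by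
  have hM0 : 0 ≤ M := (abs_nonneg (ζ 0)).trans (hM 0)
  set e : ℝ → ℝ := fun x => Real.exp (-(x*t)) * ζ x with he_def
  have he : Continuous e := by fun_prop
  set B : ℝ → ℝ := fun s => ∫ x in s..T, e x with hB_def
  have hBcont : Continuous B := cont_B he T
  set w : ℝ → ℝ := fun s => 2*t*Real.exp (2*t*s) with hw_def
  have hw : Continuous w := by fun_prop
  set D := Ioc (0:ℝ) T with hD_def
  set μ := volume.restrict D with hμ_def
  haveI hfin : IsFiniteMeasure μ :=
    ⟨by rw [hμ_def, Measure.restrict_apply_univ]; exact measure_Ioc_lt_top⟩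
  have hDmeas : MeasurableSet D := measurableSet_Ioc
  have hμT : (volume D).toReal = T := by
    rw [hD_def, Real.volume_Ioc, sub_zero, ENNReal.toReal_ofReal hT.le]
  -- bounds
  have heB : ∀ x ∈ D, |e x| ≤ M := by
    intro x hx
    rw [he_def]
    calc |Real.exp (-(x*t)) * ζ x| = Real.exp (-(x*t)) * |ζ x| := by
          rw [abs_mul, abs_of_pos (Real.exp_pos _)]
      _ ≤ 1 * M := by
          apply mul_le_mul _ (hM x) (abs_nonneg _) zero_le_one
          rw [Real.exp_le_one_iff]
          have : 0 < x * t := mul_pos hx.1 ht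
          linarith
      _ = M := one_mul M
  have hBbd : ∀ s ∈ Icc (0:ℝ) T, |B s| ≤ M * T := by
    intro s hs
    rw [hB_def]
    have h1 : ∀ x ∈ Set.uIoc s T, ‖e x‖ ≤ M := by
      intro x hx
      rw [uIoc_of_le hs.2] at hx
      exact heB x ⟨lt_of_le_of_lt hs.1 hx.1, hx.2⟩
    calc |∫ x in s..T, e x| ≤ M * |T - s| :=
          intervalIntegral.norm_integral_le_of_norm_le_const h1
      _ ≤ M * T := by
          apply mul_le_mul_of_nonneg_left _ hM0
          rw [abs_of_nonneg (by linarith [hs.1, hs.2])]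
          linarith [hs.1]
  have hwbd : ∀ s ∈ D, |w s| ≤ 2*t*Real.exp (2*t*T) := by
    intro s hs
    have h1 : w s = 2*t*Real.exp (2*t*s) := rfl
    rw [h1, abs_of_pos (by positivity)]
    have h2 : Real.exp (2*t*s) ≤ Real.exp (2*t*T) := Real.exp_le_exp.mpr (by nlinarith [hs.2])
    nlinarith
  -- the inner kernel function
  set Ψ : ℝ → ℝ → ℝ → ℝ := fun u v s => if s < min u v then w s * e u * e v else 0 with hΨ_def
  set Φ : ℝ → ℝ → ℝ := fun u s => if s < u then w s * e u * B s else 0 with hΦ_def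
  -- ae membership in D ×ˢ D
  have hprodae : ∀ᵐ p : ℝ × ℝ ∂(μ.prod μ), p.1 ∈ D ∧ p.2 ∈ D := by
    rw [hμ_def, Measure.prod_restrict]
    filter_upwards [ae_restrict_mem (hDmeas.prod hDmeas)] with p hp
    exact ⟨hp.1, hp.2⟩
  -- kernel identity
  have hker : ∀ u ∈ D, ∀ v ∈ D, Real.exp (-(|u - v| * t)) * (ζ u * ζ v)
      = e u * e v + ∫ s, Ψ u v s ∂μ := by
    intro u hu v hv
    have hm0 : 0 < min u v := lt_min hu.1 hv.1
    have hmT : min u v ≤ T := le_trans (min_le_left _ _) hu.2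
    have h1 : ∫ s, Ψ u v s ∂μ = ∫ s in D, (Iio (min u v)).indicator
        (fun s => w s * e u * e v) s := by
      apply MeasureTheory.integral_congr_ae
      apply ae_of_all
      intro s
      rw [hΨ_def, Set.indicator_apply]
      simp only [mem_Iio]
    rw [h1, setIntegral_indicator measurableSet_Iio]
    have hDm : D ∩ Iio (min u v) = Ioo 0 (min u v) := by
      ext s
      simp only [hD_def, mem_inter_iff, mem_Ioc, mem_Iio, mem_Ioo]
      constructor
      · rintro ⟨⟨h1', _⟩, h2'⟩; exact ⟨h1', h2'⟩
      · rintro ⟨h1', h2'⟩; exact ⟨⟨h1', le_trans h2'.le hmT⟩, h2'⟩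
    rw [hDm, ← integral_Ioc_eq_integral_Ioo, MeasureTheory.integral_mul_const, MeasureTheory.integral_mul_const,
      exp_int ht hm0.le]
    have habs : |u - v| = u + v - 2 * min u v := by
      rcases le_total u v with h | h
      · rw [abs_of_nonpos (by linarith), min_eq_left h]; ring
      · rw [abs_of_nonneg (by linarith), min_eq_right h]; ring
    rw [habs, he_def]
    have hexp : Real.exp (-((u + v - 2 * min u v) * t))
        = Real.exp (-(u*t)) * Real.exp (-(v*t)) * Real.exp (2*t*(min u v)) := by
      rw [← Real.exp_add, ← Real.exp_add]; congr 1; ring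
    rw [hexp]; ring
  -- measurability of Ψ slices
  have hΨm : ∀ u : ℝ, AEStronglyMeasurable (fun p : ℝ × ℝ => Ψ u p.1 p.2) (μ.prod μ) := by
    intro u
    apply Measurable.aestronglyMeasurable
    apply Measurable.ite
    · exact measurableSet_lt measurable_snd (measurable_const.min measurable_fst)
    · exact (((hw.comp continuous_snd).mul continuous_const).mul
        (he.comp continuous_fst)).measurable
    · exact measurable_const
  have hΦm : AEStronglyMeasurable (fun p : ℝ × ℝ => Φ p.1 p.2) (μ.prod μ) := by
    apply Measurable.aestronglyMeasurable
    apply Measurable.ite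
    · exact measurableSet_lt measurable_snd measurable_fst
    · exact (((hw.comp continuous_snd).mul (he.comp continuous_fst)).mul
        (hBcont.comp continuous_snd)).measurable
    · exact measurable_const
  set C₁ : ℝ := 2*t*Real.exp (2*t*T) * M * M with hC₁_def
  set C₂ : ℝ := 2*t*Real.exp (2*t*T) * M * (M*T) with hC₂_def
  have hΨbd : ∀ u ∈ D, ∀ v ∈ D, ∀ s ∈ D, |Ψ u v s| ≤ C₁ := by
    intro u hu v hv s hs
    have h1 : Ψ u v s = if s < min u v then w s * e u * e v else 0 := rfl
    rw [h1]
    by_cases h : s < min u v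
    · rw [if_pos h, hC₁_def, abs_mul, abs_mul]
      have hA : (0:ℝ) ≤ 2*t*Real.exp (2*t*T) := by positivity
      have s1 : |w s| * |e u| ≤ 2*t*Real.exp (2*t*T) * M :=
        mul_le_mul (hwbd s hs) (heB u hu) (abs_nonneg _) hA
      exact mul_le_mul s1 (heB v hv) (abs_nonneg _) (mul_nonneg hA hM0)
    · rw [if_neg h, abs_zero, hC₁_def]; positivity
  have hΦbd : ∀ u ∈ D, ∀ s ∈ D, |Φ u s| ≤ C₂ := by
    intro u hu s hs
    have h1 : Φ u s = if s < u then w s * e u * B s else 0 := rfl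
    rw [h1]
    by_cases h : s < u
    · rw [if_pos h, hC₂_def, abs_mul, abs_mul]
      have hA : (0:ℝ) ≤ 2*t*Real.exp (2*t*T) := by positivity
      have s1 : |w s| * |e u| ≤ 2*t*Real.exp (2*t*T) * M :=
        mul_le_mul (hwbd s hs) (heB u hu) (abs_nonneg _) hA
      exact mul_le_mul s1 (hBbd s ⟨hs.1.le, hs.2⟩) (abs_nonneg _) (mul_nonneg hA hM0)
    · rw [if_neg h, abs_zero, hC₂_def]; positivity
  -- integrability on product
  have hΨint : ∀ u ∈ D, Integrable (Function.uncurry fun v s => Ψ u v s) (μ.prod μ) := by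
    intro u hu
    apply Integrable.mono' (integrable_const C₁) (hΨm u)
    filter_upwards [hprodae] with p hp
    exact (hΨbd u hu p.1 hp.1 p.2 hp.2)
  have hΦint : Integrable (Function.uncurry fun u s => Φ u s) (μ.prod μ) := by
    apply Integrable.mono' (integrable_const C₂) hΦm
    filter_upwards [hprodae] with p hp
    exact (hΦbd p.1 hp.1 p.2 hp.2)
  -- B as set integral
  have hBset : ∀ s, 0 ≤ s → s ≤ T → ∫ v in Ioc s T, e v = B s := by
    intro s _ h2
    exact (intervalIntegral.integral_of_le h2).symm
  -- inner integral over v of Ψ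
  have hinner : ∀ u ∈ D, ∀ s ∈ D, ∫ v, Ψ u v s ∂μ = Φ u s := by
    intro u hu s hs
    have hDs : D ∩ Ioi s = Ioc s T := by
      ext v
      simp only [hD_def, mem_inter_iff, mem_Ioc, mem_Ioi]
      constructor
      · rintro ⟨⟨_, h2⟩, h3⟩; exact ⟨h3, h2⟩
      · rintro ⟨h3, h2⟩; exact ⟨⟨lt_trans hs.1 h3, h2⟩, h3⟩
    by_cases hsu : s < u
    · have h1 : ∀ v, Ψ u v s = (Ioi s).indicator (fun v => (w s * e u) * e v) v := by
        intro v
        rw [Set.indicator_apply]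
        simp only [mem_Ioi]
        by_cases hsv : s < v
        · rw [hΨ_def]
          simp only []
          rw [if_pos (lt_min_iff.mpr ⟨hsu, hsv⟩), if_pos hsv]
        · rw [hΨ_def]
          simp only []
          rw [if_neg (fun h => hsv (lt_min_iff.mp h).2), if_neg hsv]
      have h2 : Φ u s = w s * e u * B s := if_pos hsu
      rw [h2]
      calc ∫ v, Ψ u v s ∂μ
          = ∫ v in D, (Ioi s).indicator (fun v => (w s * e u) * e v) v := by
            apply MeasureTheory.integral_congr_ae (ae_of_all _ h1)
        _ = ∫ v in D ∩ Ioi s, (w s * e u) * e v := setIntegral_indicator measurableSet_Ioi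
        _ = ∫ v in Ioc s T, (w s * e u) * e v := by rw [hDs]
        _ = (w s * e u) * ∫ v in Ioc s T, e v := by rw [MeasureTheory.integral_const_mul]
        _ = w s * e u * B s := by rw [hBset s hs.1.le hs.2]
    · have h2 : Φ u s = 0 := if_neg hsu
      rw [h2]
      have h1 : ∀ v, Ψ u v s = 0 := by
        intro v
        rw [hΨ_def]
        simp only []
        exact if_neg (fun h => hsu (lt_min_iff.mp h).1)
      simp only [h1]
      exact MeasureTheory.integral_zero _ _
  -- outer integral over u of Φ
  have houter : ∀ s ∈ D, ∫ u, Φ u s ∂μ = w s * B s * B s := by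
    intro s hs
    have hDs : D ∩ Ioi s = Ioc s T := by
      ext v
      simp only [hD_def, mem_inter_iff, mem_Ioc, mem_Ioi]
      constructor
      · rintro ⟨⟨_, h2⟩, h3⟩; exact ⟨h3, h2⟩
      · rintro ⟨h3, h2⟩; exact ⟨⟨lt_trans hs.1 h3, h2⟩, h3⟩
    have h1 : ∀ u, Φ u s = (Ioi s).indicator (fun u => (w s * B s) * e u) u := by
      intro u
      rw [Set.indicator_apply]
      simp only [mem_Ioi]
      rw [hΦ_def]
      simp only []
      by_cases hsu : s < u
      · rw [if_pos hsu, if_pos hsu]; ring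
      · rw [if_neg hsu, if_neg hsu]
    calc ∫ u, Φ u s ∂μ
        = ∫ u in D, (Ioi s).indicator (fun u => (w s * B s) * e u) u := by
          apply MeasureTheory.integral_congr_ae (ae_of_all _ h1)
      _ = ∫ u in D ∩ Ioi s, (w s * B s) * e u := setIntegral_indicator measurableSet_Ioi
      _ = ∫ u in Ioc s T, (w s * B s) * e u := by rw [hDs]
      _ = (w s * B s) * ∫ u in Ioc s T, e u := by rw [MeasureTheory.integral_const_mul]
      _ = w s * B s * B s := by rw [hBset s hs.1.le hs.2]
  -- integrability of partial integrals
  have heint : Integrable e μ := by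
    rw [hμ_def, hD_def]
    exact he.integrableOn_Ioc
  have hΨpartial : ∀ u ∈ D, Integrable (fun v => ∫ s, Ψ u v s ∂μ) μ := by
    intro u hu
    apply Integrable.mono' (integrable_const (C₁ * T))
    · exact (hΨm u).integral_prod_right'
    · rw [hμ_def]
      filter_upwards [ae_restrict_mem hDmeas] with v hv
      calc ‖∫ s, Ψ u v s ∂μ‖ ≤ C₁ * (μ univ).toReal := by
            apply MeasureTheory.norm_integral_le_of_norm_le_const
            filter_upwards [ae_restrict_mem hDmeas] with s hsD
            rw [Real.norm_eq_abs]
            exact hΨbd u hu v hv s hsD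
        _ = C₁ * T := by
            rw [hμ_def, Measure.restrict_apply_univ, hμT]
  have hΦpartial : Integrable (fun u => ∫ s, Φ u s ∂μ) μ := by
    apply Integrable.mono' (integrable_const (C₂ * T))
    · exact hΦm.integral_prod_right'
    · rw [hμ_def]
      filter_upwards [ae_restrict_mem hDmeas] with u hu
      calc ‖∫ s, Φ u s ∂μ‖ ≤ C₂ * (μ univ).toReal := by
            apply MeasureTheory.norm_integral_le_of_norm_le_const
            filter_upwards [ae_restrict_mem hDmeas] with s hsD
            rw [Real.norm_eq_abs]
            exact hΦbd u hu s hsD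
        _ = C₂ * T := by
            rw [hμ_def, Measure.restrict_apply_univ, hμT]
  -- swaps
  have hswap1 : ∀ u ∈ D, ∫ v, (∫ s, Ψ u v s ∂μ) ∂μ = ∫ s, (∫ v, Ψ u v s ∂μ) ∂μ :=
    fun u hu => integral_integral_swap (hΨint u hu)
  have hC1 : ∫ v, e v ∂μ = B 0 := hBset 0 le_rfl hT.le
  have hstep1 : ∀ u ∈ D, ∫ v, Real.exp (-(|u - v| * t)) * (ζ u * ζ v) ∂μ
      = e u * B 0 + ∫ s, Φ u s ∂μ := by
    intro u hu
    calc ∫ v, Real.exp (-(|u - v| * t)) * (ζ u * ζ v) ∂μ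
        = ∫ v, (e u * e v + ∫ s, Ψ u v s ∂μ) ∂μ :=
          setIntegral_congr_fun hDmeas (fun v hv => hker u hu v hv)
      _ = (∫ v, e u * e v ∂μ) + ∫ v, (∫ s, Ψ u v s ∂μ) ∂μ :=
          MeasureTheory.integral_add (heint.const_mul (e u)) (hΨpartial u hu)
      _ = e u * B 0 + ∫ s, (∫ v, Ψ u v s ∂μ) ∂μ := by
          rw [MeasureTheory.integral_const_mul, hC1, hswap1 u hu]
      _ = e u * B 0 + ∫ s, Φ u s ∂μ := by
          congr 1
          exact setIntegral_congr_fun hDmeas (fun s hs => hinner u hu s hs)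
  calc ∫ u, (∫ v, Real.exp (-(|u - v| * t)) * (ζ u * ζ v) ∂μ) ∂μ
      = ∫ u, (e u * B 0 + ∫ s, Φ u s ∂μ) ∂μ :=
        setIntegral_congr_fun hDmeas (fun u hu => hstep1 u hu)
    _ = (∫ u, e u * B 0 ∂μ) + ∫ u, (∫ s, Φ u s ∂μ) ∂μ :=
        MeasureTheory.integral_add (heint.mul_const (B 0)) hΦpartial
    _ = B 0 * B 0 + ∫ s, (∫ u, Φ u s ∂μ) ∂μ := by
        congr 1
        · rw [MeasureTheory.integral_mul_const, hC1]
        · exact integral_integral_swap hΦint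
    _ = B 0 * B 0 + ∫ s, w s * B s * B s ∂μ := by
        congr 1
        exact setIntegral_congr_fun hDmeas (fun s hs => houter s hs)
    _ = (B 0)^2 + ∫ s, w s * (B s)^2 ∂μ := by
        rw [pow_two]
        congr 1
        exact setIntegral_congr_fun hDmeas (fun s _ => by ring)

lemma eq_zero_on_Icc_of_ae_zero {T : ℝ} (hT : 0 < T) {g : ℝ → ℝ} (hg : Continuous g)
    (hae : ∀ᵐ s ∂(volume.restrict (Ioc (0:ℝ) T)), g s = 0) : ∀ s ∈ Icc (0:ℝ) T, g s = 0 := by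
  intro s₀ hs₀
  by_contra hne
  have hc : 0 < |g s₀| := abs_pos.mpr hne
  have hev : {s | |g s₀|/2 < |g s|} ∈ nhds s₀ :=
    (isOpen_lt continuous_const hg.abs).mem_nhds (by simp only [mem_setOf_eq]; linarith)
  obtain ⟨δ, hδ, hball⟩ := Metric.mem_nhds_iff.mp hev
  set a' := max (s₀ - δ/2) 0 with ha'
  set b' := min (s₀ + δ/2) T with hb'
  have hab : a' < b' :=
    max_lt (lt_min (by linarith) (by linarith [hs₀.2])) (lt_min (by linarith [hs₀.1]) hT)
  have hsub : Ioo a' b' ⊆ {x | x ∈ Ioc (0:ℝ) T ∧ g x ≠ 0} := by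
    intro x hx
    have hx1 : 0 < x := lt_of_le_of_lt (le_max_right _ _) hx.1
    have hx2 : x ≤ T := le_trans hx.2.le (min_le_right _ _)
    have hxd : dist x s₀ < δ := by
      rw [Real.dist_eq, abs_sub_lt_iff]
      constructor
      · have := hx.2.trans_le (min_le_left _ _); linarith
      · have := (le_max_left _ _).trans_lt hx.1; linarith
    have hxm : x ∈ Metric.ball s₀ δ := by rwa [Metric.mem_ball]
    have := hball hxm
    simp only [mem_setOf_eq] at this
    exact ⟨⟨hx1, hx2⟩, fun h0 => by rw [h0] at this; simp at this; linarith⟩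
  have hnull : volume {x | x ∈ Ioc (0:ℝ) T ∧ g x ≠ 0} = 0 := by
    have h1 := (ae_restrict_iff' measurableSet_Ioc).mp hae
    rw [ae_iff] at h1
    convert h1 using 2
    ext x
    simp only [mem_setOf_eq, not_forall]
    tauto
  have := measure_mono_null hsub hnull
  rw [Real.volume_Ioo] at this
  exact absurd this (by simp [ENNReal.ofReal_eq_zero]; linarith)

lemma extraction {T t : ℝ} (hT : 0 < T) (ht : 0 < t) {ζ : ℝ → ℝ} (hζ : Continuous ζ)
    {M : ℝ} (hM : ∀ x, |ζ x| ≤ M)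
    (h0 : ∫ u in Ioc (0:ℝ) T, ∫ v in Ioc (0:ℝ) T, Real.exp (-(|u - v| * t)) * (ζ u * ζ v) = 0) :
    ∀ r ∈ Icc (0:ℝ) T, ζ r = 0 := by
  set e : ℝ → ℝ := fun x => Real.exp (-(x*t)) * ζ x with he_def
  have he : Continuous e := by continuity
  set B : ℝ → ℝ := fun s => ∫ x in s..T, e x with hB_def
  have hBcont : Continuous B := by
    have h1 : Continuous fun s => ∫ x in T..s, e x :=
      intervalIntegral.continuous_primitive (fun a b => he.intervalIntegrable a b) T
    have : B = fun s => -∫ x in T..s, e x := by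
      funext s; rw [hB_def]; exact intervalIntegral.integral_symm T s
    rw [this]; exact h1.neg
  have hdec := decomp hT ht hζ hM
  rw [h0] at hdec
  set g : ℝ → ℝ := fun s => 2*t*Real.exp (2*t*s) * (B s)^2 with hg_def
  have hgcont : Continuous g := by fun_prop
  have hgnonneg : ∀ s, 0 ≤ g s := by
    intro s
    apply mul_nonneg (by positivity) (sq_nonneg _)
  have hgint : IntegrableOn g (Ioc (0:ℝ) T) := hgcont.integrableOn_Ioc
  have hgzero : ∫ s in Ioc (0:ℝ) T, g s = 0 := by
    have hsq : 0 ≤ (∫ x in (0:ℝ)..T, e x)^2 := sq_nonneg _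
    have hginteg : 0 ≤ ∫ s in Ioc (0:ℝ) T, g s :=
      integral_nonneg fun s => hgnonneg s
    linarith [hdec.symm]
  have hae : ∀ᵐ s ∂(volume.restrict (Ioc (0:ℝ) T)), g s = 0 := by
    have := (integral_eq_zero_iff_of_nonneg_ae
      (ae_of_all _ hgnonneg) hgint).mp hgzero
    filter_upwards [this] with s hs using hs
  have hBzero : ∀ s ∈ Icc (0:ℝ) T, B s = 0 := by
    intro s hs
    have hg0 := eq_zero_on_Icc_of_ae_zero hT hgcont hae s hs
    rw [hg_def] at hg0
    have h2t : (0:ℝ) < 2*t*Real.exp (2*t*s) := by positivity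
    have := mul_eq_zero.mp hg0
    rcases this with h | h
    · exact absurd h (ne_of_gt h2t)
    · exact pow_eq_zero_iff (by norm_num) |>.mp h
  -- now extract ζ = 0 on Ioo, then endpoints
  have hIoo : ∀ r ∈ Ioo (0:ℝ) T, ζ r = 0 := by
    intro r hr
    have hD1 : HasDerivAt B (-e r) r :=
      intervalIntegral.integral_hasDerivAt_left (he.intervalIntegrable r T)
        (he.stronglyMeasurableAtFilter _ _) he.continuousAt
    have hev : B =ᶠ[nhds r] (fun _ => (0:ℝ)) := by
      filter_upwards [(isOpen_Ioo (a := (0:ℝ)) (b := T)).mem_nhds hr] with x hx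
      exact hBzero x (Ioo_subset_Icc_self hx)
    have hD2 : HasDerivAt B 0 r := (hasDerivAt_const r (0:ℝ)).congr_of_eventuallyEq hev
    have : -e r = 0 := hD1.unique hD2
    have her : e r = 0 := by linarith
    rw [he_def] at her
    rcases mul_eq_zero.mp her with h | h
    · exact absurd h (Real.exp_ne_zero _)
    · exact h
  intro r hr
  rcases eq_or_lt_of_le hr.1 with hr0 | hr0
  · -- r = 0
    subst hr0
    have hne : (nhdsWithin (0:ℝ) (Ioo 0 T)).NeBot := by
      rw [← mem_closure_iff_nhdsWithin_neBot, closure_Ioo hT.ne]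
      exact ⟨le_refl 0, hT.le⟩
    have h1 : Filter.Tendsto ζ (nhdsWithin 0 (Ioo 0 T)) (nhds (ζ 0)) :=
      (hζ.continuousAt).continuousWithinAt
    have h2 : Filter.Tendsto ζ (nhdsWithin 0 (Ioo 0 T)) (nhds 0) := by
      apply Filter.Tendsto.congr' _ tendsto_const_nhds
      filter_upwards [self_mem_nhdsWithin] with x hx
      exact (hIoo x hx).symm
    exact tendsto_nhds_unique h1 h2
  rcases eq_or_lt_of_le hr.2 with hT' | hT'
  · -- r = T
    subst hT'
    have hne : (nhdsWithin r (Ioo 0 r)).NeBot := by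
      rw [← mem_closure_iff_nhdsWithin_neBot, closure_Ioo (ne_of_lt hr0)]
      exact ⟨hr0.le, le_refl r⟩
    have h1 : Filter.Tendsto ζ (nhdsWithin r (Ioo 0 r)) (nhds (ζ r)) :=
      (hζ.continuousAt).continuousWithinAt
    have h2 : Filter.Tendsto ζ (nhdsWithin r (Ioo 0 r)) (nhds 0) := by
      apply Filter.Tendsto.congr' _ tendsto_const_nhds
      filter_upwards [self_mem_nhdsWithin] with x hx
      exact (hIoo x hx).symm
    exact tendsto_nhds_unique h1 h2
  · exact hIoo r ⟨hr0, hT'⟩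
lemma main_fubini {H T : ℝ} (hH : H ∈ Ioo (1/2:ℝ) 1) (hT : 0 < T) {ζ : ℝ → ℝ}
    (hζ : Continuous ζ) {M : ℝ} (hM : ∀ x, |ζ x| ≤ M)
    (hQnonneg : ∀ t : ℝ, 0 < t →
      0 ≤ ∫ u in Ioc (0:ℝ) T, ∫ v in Ioc (0:ℝ) T, Real.exp (-(|u - v| * t)) * (ζ u * ζ v))
    (hzero : ∫ u in Ioc (0:ℝ) T, ∫ v in Ioc (0:ℝ) T,
        (H * (2*H - 1) * |u - v| ^ (2*H - 2)) * ζ u * ζ v = 0) :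
    ∃ t : ℝ, 0 < t ∧ ∫ u in Ioc (0:ℝ) T, ∫ v in Ioc (0:ℝ) T,
        Real.exp (-(|u - v| * t)) * (ζ u * ζ v) = 0 := by
  obtain ⟨hH1, hH2⟩ := hH
  have hM0 : 0 ≤ M := (abs_nonneg (ζ 0)).trans (hM 0)
  set β : ℝ := 2 - 2*H with hβ_def
  have hβ : 0 < β := by rw [hβ_def]; linarith
  have hβ1 : β < 1 := by rw [hβ_def]; linarith
  have hα : (-1:ℝ) < -β := by linarith
  have hΓ : 0 < Real.Gamma β := Real.Gamma_pos_of_pos hβ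
  set c0 : ℝ := H * (2*H - 1) with hc0_def
  have hc0 : 0 < c0 := by rw [hc0_def]; nlinarith
  set c' : ℝ := c0 / Real.Gamma β with hc'_def
  have hc' : 0 < c' := div_pos hc0 hΓ
  have hpow : ∀ x : ℝ, x ^ (2*H - 2) = x ^ (-β) := by
    intro x; congr 1; rw [hβ_def]; ring
  set D := Ioc (0:ℝ) T with hD_def
  set μD := volume.restrict D with hμD_def
  set μI := volume.restrict (Ioi (0:ℝ)) with hμI_def
  have hDmeas : MeasurableSet D := measurableSet_Ioc
  have hμT : (volume D).toReal = T := by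
    rw [hD_def, Real.volume_Ioc, sub_zero, ENNReal.toReal_ofReal hT.le]
  set W : ℝ → ℝ → ℝ := fun u t => ∫ v, Real.exp (-(|u - v| * t)) * (ζ u * ζ v) ∂μD
    with hW_def
  -- Step A : per-u Fubini
  have hA : ∀ u : ℝ, ∫ v, (H * (2*H - 1) * |u - v| ^ (2*H - 2)) * ζ u * ζ v ∂μD
      = c' * ∫ t, t ^ (β - 1) * W u t ∂μI := by
    intro u
    set F : ℝ → ℝ → ℝ :=
      fun v t => t ^ (β - 1) * (Real.exp (-(|u - v| * t)) * (ζ u * ζ v)) with hF_def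
    have hne : ∀ᵐ (v : ℝ) ∂μD, v ≠ u := by
      apply ae_restrict_of_ae
      rw [ae_iff]
      have h1 : {v : ℝ | ¬ v ≠ u} = {u} := by ext v; simp
      rw [h1]
      exact measure_singleton u
    have hFmeas : AEStronglyMeasurable (fun p : ℝ × ℝ => F p.1 p.2) (μD.prod μI) := by
      have m1 : Measurable fun p : ℝ × ℝ => p.2 ^ (β - 1) := by fun_prop
      have m2 : Continuous fun p : ℝ × ℝ =>
          Real.exp (-(|u - p.1| * p.2)) * (ζ u * ζ p.1) :=
        (Real.continuous_exp.comp
          (((continuous_const.sub continuous_fst).abs.mul continuous_snd).neg)).mul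
          (continuous_const.mul (hζ.comp continuous_fst))
      exact (m1.mul m2.measurable).aestronglyMeasurable
    have cond1 : ∀ᵐ (v : ℝ) ∂μD, Integrable (fun t => F v t) μI := by
      filter_upwards [hne] with v hv
      have ha : 0 < |u - v| := abs_pos.mpr (sub_ne_zero.mpr hv.symm)
      have h1 := (gInt hβ ha).mul_const (ζ u * ζ v)
      simpa only [mul_assoc] using h1
    have hnorm : ∀ v : ℝ, v ≠ u →
        ∫ t, ‖F v t‖ ∂μI = Real.Gamma β * |u - v| ^ (-β) * |ζ u * ζ v| := by
      intro v hv
      have ha : 0 < |u - v| := abs_pos.mpr (sub_ne_zero.mpr hv.symm)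
      have h1 : ∀ᵐ t ∂μI, ‖F v t‖
          = (t ^ (β - 1) * Real.exp (-(|u - v| * t))) * |ζ u * ζ v| := by
        filter_upwards [ae_restrict_mem measurableSet_Ioi] with t htI
        rw [Real.norm_eq_abs, abs_mul, abs_mul,
          abs_of_nonneg (Real.rpow_nonneg (le_of_lt htI) _),
          abs_of_pos (Real.exp_pos _), mul_assoc]
      rw [MeasureTheory.integral_congr_ae h1, MeasureTheory.integral_mul_const, rep0 hβ ha]
    have mX : Measurable fun v : ℝ => Real.Gamma β * |u - v| ^ (-β) * |ζ u * ζ v| := by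
      have m1 : Measurable fun v : ℝ => Real.Gamma β * |u - v| ^ (-β) := by fun_prop
      exact m1.mul (continuous_const.mul hζ).abs.measurable
    have Xint : Integrable (fun v : ℝ => Real.Gamma β * |u - v| ^ (-β) * |ζ u * ζ v|) μD := by
      apply Integrable.mono' ((integrableOn_abs_rpow hα u hT.le).const_mul
        (Real.Gamma β * M^2))
      · exact mX.aestronglyMeasurable
      · apply ae_of_all
        intro v
        have h1 : (0:ℝ) ≤ |u - v| ^ (-β) := Real.rpow_nonneg (abs_nonneg _) _
        rw [Real.norm_eq_abs, abs_of_nonneg (by positivity)]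
        have h2 : |ζ u * ζ v| ≤ M^2 := by
          rw [abs_mul, pow_two]
          exact mul_le_mul (hM u) (hM v) (abs_nonneg _) hM0
        have h3 : |u - v| = |v - u| := abs_sub_comm u v
        calc Real.Gamma β * |u - v| ^ (-β) * |ζ u * ζ v|
            ≤ Real.Gamma β * |u - v| ^ (-β) * M^2 := by
              apply mul_le_mul_of_nonneg_left h2 (by positivity)
          _ = Real.Gamma β * M^2 * |v - u| ^ (-β) := by rw [h3]; ring
    have cond2 : Integrable (fun v => ∫ t, ‖F v t‖ ∂μI) μD := by
      apply Xint.congr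
      filter_upwards [hne] with v hv
      exact (hnorm v hv).symm
    have hF : Integrable (fun p : ℝ × ℝ => F p.1 p.2) (μD.prod μI) :=
      (MeasureTheory.integrable_prod_iff hFmeas).mpr ⟨cond1, cond2⟩
    calc ∫ v, (H * (2*H - 1) * |u - v| ^ (2*H - 2)) * ζ u * ζ v ∂μD
        = ∫ v, c' * ∫ t, F v t ∂μI ∂μD := by
          apply MeasureTheory.integral_congr_ae
          filter_upwards [hne] with v hv
          have ha : 0 < |u - v| := abs_pos.mpr (sub_ne_zero.mpr hv.symm)
          have h2 : ∫ t, F v t ∂μI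
              = (Real.Gamma β * |u - v| ^ (-β)) * (ζ u * ζ v) := by
            have h3 : (fun t => F v t)
                = fun t => (t ^ (β - 1) * Real.exp (-(|u - v| * t))) * (ζ u * ζ v) :=
              funext fun t => (mul_assoc _ _ _).symm
            rw [h3, MeasureTheory.integral_mul_const, rep0 hβ ha]
          rw [h2, hpow |u - v|]
          have h4 : c' * Real.Gamma β = c0 := by
            rw [hc'_def]; field_simp
          linear_combination (|u - v| ^ (-β) * (ζ u * ζ v)) * h4.symm
      _ = c' * ∫ v, (∫ t, F v t ∂μI) ∂μD := MeasureTheory.integral_const_mul c' _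
      _ = c' * ∫ t, (∫ v, F v t ∂μD) ∂μI := by
          congr 1
          exact MeasureTheory.integral_integral_swap hF
      _ = c' * ∫ t, t ^ (β - 1) * W u t ∂μI := by
          congr 1
          apply MeasureTheory.integral_congr_ae
          apply ae_of_all
          intro t
          exact MeasureTheory.integral_const_mul _ _
  -- bounds on W
  have hWb1 : ∀ u : ℝ, ∀ t : ℝ, 0 < t → |W u t| ≤ M^2 * T := by
    intro u t ht
    have h1 : ∀ᵐ v ∂μD, ‖Real.exp (-(|u - v| * t)) * (ζ u * ζ v)‖ ≤ M^2 := by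
      filter_upwards [ae_restrict_mem hDmeas] with v _
      rw [Real.norm_eq_abs, abs_mul, abs_of_pos (Real.exp_pos _)]
      have h2 : Real.exp (-(|u - v| * t)) ≤ 1 := by
        rw [Real.exp_le_one_iff]
        have : 0 ≤ |u - v| * t := mul_nonneg (abs_nonneg _) ht.le
        linarith
      have h3 : |ζ u * ζ v| ≤ M^2 := by
        rw [abs_mul, pow_two]
        exact mul_le_mul (hM u) (hM v) (abs_nonneg _) hM0
      calc Real.exp (-(|u - v| * t)) * |ζ u * ζ v| ≤ 1 * (M^2) :=
            mul_le_mul h2 h3 (abs_nonneg _) zero_le_one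
        _ = M^2 := one_mul _
    calc |W u t| ≤ M^2 * (μD univ).toReal :=
          MeasureTheory.norm_integral_le_of_norm_le_const h1
      _ = M^2 * T := by rw [hμD_def, Measure.restrict_apply_univ, hμT]
  have hexpint : ∀ t : ℝ, 0 < t → ∫ x in (0:ℝ)..T, Real.exp (-(x*t)) ≤ 1/t := by
    intro t ht
    have hd : ∀ x ∈ uIcc (0:ℝ) T,
        HasDerivAt (fun y => -(Real.exp (-(y*t))/t)) (Real.exp (-(x*t))) x := by
      intro x _
      have h1 : HasDerivAt (fun y : ℝ => -(y*t)) (-t) x := by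
        have h := ((hasDerivAt_id x).mul_const t).neg; rw [one_mul] at h; exact h
      have h2 := h1.exp
      have h3 := (h2.div_const t).neg
      refine h3.congr_deriv ?_
      rw [mul_neg, neg_div, neg_neg, mul_div_assoc, div_self ht.ne', mul_one]
    have hint : IntervalIntegrable (fun x => Real.exp (-(x*t))) volume 0 T := by
      apply Continuous.intervalIntegrable
      fun_prop
    rw [intervalIntegral.integral_eq_sub_of_hasDerivAt hd hint]
    have h5 := Real.exp_pos (-(T*t))
    have h6 : Real.exp (-((0:ℝ)*t)) = 1 := by norm_num
    rw [h6]
    have h7 : -(Real.exp (-(T*t))/t) - -(1/t) = (1 - Real.exp (-(T*t)))/t := by ring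
    rw [h7]
    exact (div_le_div_iff_of_pos_right ht).mpr (by linarith)
  have hWb2 : ∀ u ∈ D, ∀ t : ℝ, 0 < t → |W u t| ≤ M^2 * (2/t) := by
    intro u hu t ht
    have hcont : Continuous fun v : ℝ => Real.exp (-(|u - v| * t)) := by fun_prop
    have hsub : D ⊆ Ioc (u - T) (u + T) := by
      intro v hv
      rw [hD_def] at hu hv
      constructor
      · have := hu.2; have := hv.1; linarith
      · have := hu.1; have := hv.2; linarith
    have hJ : ∫ v, Real.exp (-(|u - v| * t)) ∂μD ≤ 2/t := by
      have hmono : ∫ v, Real.exp (-(|u - v| * t)) ∂μD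
          ≤ ∫ v in Ioc (u - T) (u + T), Real.exp (-(|u - v| * t)) := by
        rw [hμD_def]
        apply MeasureTheory.setIntegral_mono_set (hcont.integrableOn_Ioc)
          (ae_of_all _ (fun v => (Real.exp_pos _).le))
        exact HasSubset.Subset.eventuallyLE hsub
      have hi1 : IntervalIntegrable (fun v => Real.exp (-((u - v) * t))) volume (u-T) u :=
        Continuous.intervalIntegrable (by fun_prop) _ _
      have hi2 : IntervalIntegrable (fun v => Real.exp (-((v - u) * t))) volume u (u+T) :=
        Continuous.intervalIntegrable (by fun_prop) _ _
      have hpart1 : ∫ v in (u-T)..u, Real.exp (-(|u - v| * t))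
          = ∫ x in (0:ℝ)..T, Real.exp (-(x*t)) := by
        rw [intervalIntegral.integral_congr
          (g := fun v => Real.exp (-((u - v) * t))) ?_]
        · have := intervalIntegral.integral_comp_sub_left
            (a := u-T) (b := u) (fun x => Real.exp (-(x*t))) u
          rw [this]
          norm_num
        · intro v hv
          rw [uIcc_of_le (by linarith : u - T ≤ u)] at hv
          show Real.exp (-(|u - v| * t)) = Real.exp (-((u - v) * t))
          rw [abs_of_nonneg (by linarith [hv.2] : (0:ℝ) ≤ u - v)]
      have hpart2 : ∫ v in u..(u+T), Real.exp (-(|u - v| * t))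
          = ∫ x in (0:ℝ)..T, Real.exp (-(x*t)) := by
        rw [intervalIntegral.integral_congr
          (g := fun v => Real.exp (-((v - u) * t))) ?_]
        · have := intervalIntegral.integral_comp_sub_right
            (a := u) (b := u+T) (fun x => Real.exp (-(x*t))) u
          rw [this]
          norm_num
        · intro v hv
          rw [uIcc_of_le (by linarith : u ≤ u + T)] at hv
          show Real.exp (-(|u - v| * t)) = Real.exp (-((v - u) * t))
          rw [abs_sub_comm, abs_of_nonneg (by linarith [hv.1] : (0:ℝ) ≤ v - u)]
      have hsplit : ∫ v in Ioc (u - T) (u + T), Real.exp (-(|u - v| * t))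
          = (∫ v in (u-T)..u, Real.exp (-(|u - v| * t)))
            + ∫ v in u..(u+T), Real.exp (-(|u - v| * t)) := by
        rw [← intervalIntegral.integral_of_le (by linarith : u - T ≤ u + T)]
        rw [← intervalIntegral.integral_add_adjacent_intervals
          (Continuous.intervalIntegrable (by fun_prop) _ _)
          (Continuous.intervalIntegrable (by fun_prop) _ _)]
      have hq := hexpint t ht
      calc ∫ v, Real.exp (-(|u - v| * t)) ∂μD
          ≤ ∫ v in Ioc (u - T) (u + T), Real.exp (-(|u - v| * t)) := hmono
        _ = (∫ x in (0:ℝ)..T, Real.exp (-(x*t))) + ∫ x in (0:ℝ)..T, Real.exp (-(x*t)) := by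
            rw [hsplit, hpart1, hpart2]
        _ ≤ 1/t + 1/t := add_le_add hq hq
        _ = 2/t := by ring
    have hWle : |W u t| ≤ ∫ v, Real.exp (-(|u - v| * t)) * M^2 ∂μD := by
      have h1 : |W u t| ≤ ∫ v, ‖Real.exp (-(|u - v| * t)) * (ζ u * ζ v)‖ ∂μD := by
        rw [← Real.norm_eq_abs]
        exact MeasureTheory.norm_integral_le_integral_norm _
      apply le_trans h1
      apply MeasureTheory.integral_mono
      · rw [hμD_def, hD_def]
        apply Continuous.integrableOn_Ioc
        fun_prop
      · rw [hμD_def, hD_def]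
        apply Continuous.integrableOn_Ioc
        fun_prop
      · intro v
        show ‖Real.exp (-(|u - v| * t)) * (ζ u * ζ v)‖ ≤ Real.exp (-(|u - v| * t)) * M^2
        rw [Real.norm_eq_abs, abs_mul, abs_of_pos (Real.exp_pos _)]
        apply mul_le_mul_of_nonneg_left _ (Real.exp_pos _).le
        rw [abs_mul, pow_two]
        exact mul_le_mul (hM u) (hM v) (abs_nonneg _) hM0
    calc |W u t| ≤ ∫ v, Real.exp (-(|u - v| * t)) * M^2 ∂μD := hWle
      _ = (∫ v, Real.exp (-(|u - v| * t)) ∂μD) * M^2 := MeasureTheory.integral_mul_const _ _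
      _ ≤ (2/t) * M^2 := mul_le_mul_of_nonneg_right hJ (by positivity)
      _ = M^2 * (2/t) := by ring
  -- dominating function
  set g₀ : ℝ → ℝ := fun t => t ^ (β - 1) * min (M^2 * T) (M^2 * (2/t)) with hg₀_def
  have hg₀meas : Measurable g₀ := by
    apply Measurable.mul
    · fun_prop
    · exact measurable_const.min (measurable_const.mul (measurable_const.div measurable_id))
  have hg₀int : Integrable g₀ μI := by
    rw [hμI_def]
    have hunion : Ioi (0:ℝ) = Ioc 0 1 ∪ Ioi 1 := (Ioc_union_Ioi_eq_Ioi zero_le_one).symm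
    rw [hunion]
    apply MeasureTheory.IntegrableOn.union
    · -- on Ioc 0 1
      apply Integrable.mono' (((intervalIntegrable_rpow' (by linarith : (-1:ℝ) < β - 1)
          (a := 0) (b := 1)).1.mono_set ?_).const_mul (M^2 * T))
      · exact hg₀meas.aestronglyMeasurable
      · filter_upwards [ae_restrict_mem measurableSet_Ioc] with t htm
        have ht : 0 < t := htm.1
        have h1 : 0 ≤ min (M^2 * T) (M^2 * (2/t)) :=
          le_min (by positivity) (by positivity)
        rw [Real.norm_eq_abs, abs_of_nonneg (mul_nonneg (Real.rpow_nonneg ht.le _) h1)]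
        calc t ^ (β - 1) * min (M^2 * T) (M^2 * (2/t))
            ≤ t ^ (β - 1) * (M^2 * T) :=
              mul_le_mul_of_nonneg_left (min_le_left _ _) (Real.rpow_nonneg ht.le _)
          _ = M^2 * T * t ^ (β - 1) := by ring
      · exact subset_rfl
    · -- on Ioi 1
      apply Integrable.mono' ((integrableOn_Ioi_rpow_of_lt
          (by linarith : β - 2 < -1) zero_lt_one).const_mul (2 * M^2))
      · exact hg₀meas.aestronglyMeasurable
      · filter_upwards [ae_restrict_mem measurableSet_Ioi] with t htm
        have ht : (0:ℝ) < t := lt_trans zero_lt_one htm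
        have h1 : 0 ≤ min (M^2 * T) (M^2 * (2/t)) :=
          le_min (by positivity) (by positivity)
        rw [Real.norm_eq_abs, abs_of_nonneg (mul_nonneg (Real.rpow_nonneg ht.le _) h1)]
        have h2 : t ^ (β - 2) = t ^ (β - 1) / t := by
          rw [show β - 2 = (β - 1) - 1 by ring, Real.rpow_sub ht, Real.rpow_one]
        calc t ^ (β - 1) * min (M^2 * T) (M^2 * (2/t))
            ≤ t ^ (β - 1) * (M^2 * (2/t)) :=
              mul_le_mul_of_nonneg_left (min_le_right _ _) (Real.rpow_nonneg ht.le _)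
          _ = 2 * M^2 * (t ^ (β - 1) / t) := by ring
          _ = 2 * M^2 * t ^ (β - 2) := by rw [h2]
  have hdom : Integrable (fun p : ℝ × ℝ => g₀ p.2) (μD.prod μI) := by
    have h1 : Integrable (fun _ : ℝ => (1:ℝ)) μD := integrable_const 1
    have h2 := h1.mul_prod hg₀int
    simpa using h2
  -- measurability of (u,t) ↦ t^(β-1) * W u t
  have hGmeas : AEStronglyMeasurable
      (fun p : ℝ × ℝ => p.2 ^ (β - 1) * W p.1 p.2) (μD.prod μI) := by
    have mW : StronglyMeasurable (fun p : ℝ × ℝ => W p.1 p.2) := by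
      have hcont : Continuous (fun q : (ℝ × ℝ) × ℝ =>
          Real.exp (-(|q.1.1 - q.2| * q.1.2)) * (ζ q.1.1 * ζ q.2)) := by
        apply Continuous.mul
        · exact Real.continuous_exp.comp
            ((((continuous_fst.fst).sub continuous_snd).abs.mul (continuous_fst.snd)).neg)
        · exact (hζ.comp continuous_fst.fst).mul (hζ.comp continuous_snd)
      exact hcont.stronglyMeasurable.integral_prod_right'
    have m1 : Measurable fun p : ℝ × ℝ => p.2 ^ (β - 1) := by fun_prop
    exact (m1.stronglyMeasurable.mul mW).aestronglyMeasurable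
  have hG : Integrable (fun p : ℝ × ℝ => p.2 ^ (β - 1) * W p.1 p.2) (μD.prod μI) := by
    apply Integrable.mono' hdom hGmeas
    have hpr : μD.prod μI = (volume.prod volume).restrict (D ×ˢ Ioi (0:ℝ)) := by
      rw [hμD_def, hμI_def, Measure.prod_restrict]
    rw [hpr]
    filter_upwards [ae_restrict_mem (hDmeas.prod measurableSet_Ioi)] with p hp
    obtain ⟨hp1, hp2⟩ := hp
    have ht : (0:ℝ) < p.2 := hp2
    rw [Real.norm_eq_abs, abs_mul, abs_of_nonneg (Real.rpow_nonneg ht.le _)]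
    have hmin : |W p.1 p.2| ≤ min (M^2 * T) (M^2 * (2/p.2)) :=
      le_min (hWb1 p.1 p.2 ht) (hWb2 p.1 hp1 p.2 ht)
    exact mul_le_mul_of_nonneg_left hmin (Real.rpow_nonneg ht.le _)
  -- Q
  set Q : ℝ → ℝ := fun t => ∫ u, W u t ∂μD with hQ_def
  have h0' : ∫ t, t ^ (β - 1) * Q t ∂μI = 0 := by
    have h1 : ∫ u, (c' * ∫ t, t ^ (β - 1) * W u t ∂μI) ∂μD = 0 := by
      rw [← hzero]
      apply MeasureTheory.integral_congr_ae
      apply ae_of_all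
      intro u
      exact (hA u).symm
    rw [MeasureTheory.integral_const_mul] at h1
    have h2 : ∫ u, (∫ t, t ^ (β - 1) * W u t ∂μI) ∂μD = 0 :=
      (mul_eq_zero.mp h1).resolve_left hc'.ne'
    have hG' : Integrable (Function.uncurry fun u t => t ^ (β - 1) * W u t)
        (μD.prod μI) := hG
    have h3 := MeasureTheory.integral_integral_swap hG'
    rw [h3] at h2
    rw [← h2]
    apply MeasureTheory.integral_congr_ae
    apply ae_of_all
    intro t
    exact (MeasureTheory.integral_const_mul _ _).symm
  have hQint : Integrable (fun t => t ^ (β - 1) * Q t) μI := by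
    have h1 := hG.integral_prod_right
    apply h1.congr
    apply ae_of_all
    intro t
    show (∫ u, t ^ (β - 1) * W u t ∂μD) = t ^ (β - 1) * Q t
    exact MeasureTheory.integral_const_mul _ _
  have hQnn : ∀ᵐ t ∂μI, 0 ≤ t ^ (β - 1) * Q t := by
    filter_upwards [ae_restrict_mem measurableSet_Ioi] with t htI
    have ht : (0:ℝ) < t := htI
    exact mul_nonneg (Real.rpow_nonneg ht.le _) (hQnonneg t ht)
  have hae0 := (MeasureTheory.integral_eq_zero_iff_of_nonneg_ae hQnn hQint).mp h0'
  haveI : (ae μI).NeBot := by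
    apply ae_neBot.mpr
    intro h
    rw [hμI_def, Measure.restrict_eq_zero] at h
    rw [Real.volume_Ioi] at h
    exact ENNReal.top_ne_zero h
  have hae1 : ∀ᵐ t ∂μI, t ^ (β - 1) * Q t = 0 ∧ t ∈ Ioi (0:ℝ) := by
    have h2 : ∀ᵐ t ∂μI, t ∈ Ioi (0:ℝ) := by
      rw [hμI_def]; exact ae_restrict_mem measurableSet_Ioi
    filter_upwards [hae0, h2] with t h1' h2'
    exact ⟨h1', h2'⟩
  obtain ⟨t₀, ht₀⟩ := hae1.exists
  refine ⟨t₀, ht₀.2, ?_⟩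
  have ht₀pos : (0:ℝ) < t₀ := ht₀.2
  have h5 : t₀ ^ (β - 1) ≠ 0 := (Real.rpow_pos_of_pos ht₀pos _).ne'
  have h6 := (mul_eq_zero.mp ht₀.1).resolve_left h5
  exact h6


end FbmAux

open MeasureTheory intervalIntegral Set

/-- Positive definiteness of the fractional Brownian motion scalar product:
if `ξ : [0,T] → ℝ` is continuous and
`⟨ξ,ξ⟩_T = ∫₀ᵀ ∫₀ᵀ H(2H−1)|u−v|^{2H−2} ξ(u) ξ(v) du dv = 0`,
then `ξ ≡ 0` on `[0,T]`. -/
theorem fbm_scalar_product_pos_def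
    (H T : ℝ) (hH : H ∈ Set.Ioo (1/2 : ℝ) 1) (hT : 0 < T)
    (ξ : ℝ → ℝ) (hξ : ContinuousOn ξ (Set.Icc 0 T))
    (hzero : (∫ u in (0:ℝ)..T, ∫ v in (0:ℝ)..T,
        (H * (2*H - 1) * |u - v| ^ (2*H - 2)) * ξ u * ξ v) = 0) :
    ∀ t ∈ Set.Icc (0:ℝ) T, ξ t = 0 := by
  set ζ : ℝ → ℝ := fun u => ξ (max 0 (min u T)) with hζ_def
  have hclamp : ∀ u : ℝ, max 0 (min u T) ∈ Set.Icc (0:ℝ) T :=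
    fun u => ⟨le_max_left _ _, max_le hT.le (min_le_right _ _)⟩
  have hζc : Continuous ζ :=
    hξ.comp_continuous (continuous_const.max (continuous_id.min continuous_const)) hclamp
  have hζeq : ∀ u ∈ Set.Icc (0:ℝ) T, ζ u = ξ u := by
    intro u hu
    have : max 0 (min u T) = u := by
      rw [min_eq_left hu.2, max_eq_right hu.1]
    simp only [hζ_def, this]
  obtain ⟨M, hMb⟩ := isCompact_Icc.exists_bound_of_continuousOn hξ
  have hM : ∀ x, |ζ x| ≤ M := by
    intro x
    have := hMb _ (hclamp x)
    simpa [Real.norm_eq_abs] using this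
  simp only [intervalIntegral.integral_of_le hT.le] at hzero
  have hzero' : ∫ u in Set.Ioc (0:ℝ) T, ∫ v in Set.Ioc (0:ℝ) T,
      (H * (2*H - 1) * |u - v| ^ (2*H - 2)) * ζ u * ζ v = 0 := by
    have heq : ∫ u in Set.Ioc (0:ℝ) T, ∫ v in Set.Ioc (0:ℝ) T,
        (H * (2*H - 1) * |u - v| ^ (2*H - 2)) * ζ u * ζ v
        = ∫ u in Set.Ioc (0:ℝ) T, ∫ v in Set.Ioc (0:ℝ) T,
        (H * (2*H - 1) * |u - v| ^ (2*H - 2)) * ξ u * ξ v := by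
      apply setIntegral_congr_fun measurableSet_Ioc
      intro u hu
      show (∫ v in Set.Ioc (0:ℝ) T, (H * (2*H - 1) * |u - v| ^ (2*H - 2)) * ζ u * ζ v)
        = ∫ v in Set.Ioc (0:ℝ) T, (H * (2*H - 1) * |u - v| ^ (2*H - 2)) * ξ u * ξ v
      apply setIntegral_congr_fun measurableSet_Ioc
      intro v hv
      show (H * (2*H - 1) * |u - v| ^ (2*H - 2)) * ζ u * ζ v
        = (H * (2*H - 1) * |u - v| ^ (2*H - 2)) * ξ u * ξ v
      rw [hζeq u (Set.Ioc_subset_Icc_self hu), hζeq v (Set.Ioc_subset_Icc_self hv)]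
    rw [heq]
    exact hzero
  have hQnonneg : ∀ t : ℝ, 0 < t →
      0 ≤ ∫ u in Set.Ioc (0:ℝ) T, ∫ v in Set.Ioc (0:ℝ) T,
        Real.exp (-(|u - v| * t)) * (ζ u * ζ v) := by
    intro t ht
    rw [FbmAux.decomp hT ht hζc hM]
    apply add_nonneg (sq_nonneg _)
    apply MeasureTheory.integral_nonneg
    intro s
    show 0 ≤ 2*t*Real.exp (2*t*s) * (∫ x in s..T, Real.exp (-(x*t)) * ζ x)^2
    exact mul_nonneg (mul_nonneg (by linarith) (Real.exp_pos _).le) (sq_nonneg _)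
  obtain ⟨t₀, ht₀, hQ0⟩ := FbmAux.main_fubini hH hT hζc hM hQnonneg hzero'
  have hfin := FbmAux.extraction hT ht₀ hζc hM hQ0
  intro r hr
  rw [← hζeq r hr]
  exact hfin r hr
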